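/- Let p be a complex polynomial of degree 4 with distinct non-collinear roots. Every root of p' lies in the interior of the convex hull of the roots of p. -/

import Mathlib

open Polynomial

/-- A combination with all-positive weights of points whose affine span is
everything lies in the interior of their convex hull. -/
lemma pos_combo_mem_interior {ι : Type*} [Fintype ι] [Nonempty ι] (z : ι → ℂ)
    (hspan : affineSpan ℝ (Set.range z) = ⊤)
    (t : ι → ℝ) (ht : ∀ i, 0 < t i) (hsum : ∑ i, t i = 1) :
    (∑ i, t i • z i) ∈ interior (convexHull ℝ (Set.range z)) := by
  classical
  obtain ⟨e, he⟩ :=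
    interior_convexHull_nonempty_iff_affineSpan_eq_top.mpr hspan
  have heH : e ∈ convexHull ℝ (Set.range z) := interior_subset he
  rw [convexHull_range_eq_exists_affineCombination] at heH
  obtain ⟨s, w, hw0, hw1, hwe⟩ := heH
  set u : ι → ℝ := fun i => if i ∈ s then w i else 0 with hu
  have hu0 : ∀ i, 0 ≤ u i := by
    intro i; simp only [hu]; split
    · exact hw0 _ ‹_›
    · exact le_rfl
  have hu1 : ∑ i, u i = 1 := by
    rw [hu, Finset.sum_ite_mem, Finset.univ_inter, hw1]
  have hue : ∑ i, u i • z i = e := by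
    rw [← hwe, s.affineCombination_eq_linear_combination z w hw1]
    rw [hu]
    simp only [ite_smul, zero_smul, Finset.sum_ite_mem, Finset.univ_inter]
  have hule : ∀ i, u i ≤ 1 := by
    intro i
    rw [← hu1]
    exact Finset.single_le_sum (fun j _ => hu0 j) (Finset.mem_univ i)
  -- choose ε
  set ε : ℝ := Finset.univ.inf' Finset.univ_nonempty t with hε
  have hε0 : 0 < ε := by
    rw [hε, Finset.lt_inf'_iff]
    exact fun i _ => ht i
  have hεt : ∀ i, ε ≤ t i := fun i => Finset.inf'_le _ (Finset.mem_univ i)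
  set v : ι → ℝ := fun i => (1 + ε) * t i - ε * u i with hv
  have hv0 : ∀ i, 0 ≤ v i := by
    intro i
    have h1 : ε * u i ≤ ε * 1 := by
      apply mul_le_mul_of_nonneg_left (hule i) hε0.le
    have h2 : ε * 1 ≤ t i := by rw [mul_one]; exact hεt i
    have h3 : t i ≤ (1 + ε) * t i := by nlinarith [ht i]
    simp only [hv]; linarith
  have hv1 : ∑ i, v i = 1 := by
    simp only [hv, Finset.sum_sub_distrib, ← Finset.mul_sum, hsum, hu1]
    ring
  have hy : (∑ i, v i • z i) ∈ convexHull ℝ (Set.range z) :=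
    mem_convexHull_of_exists_fintype v z hv0 hv1 (fun i => Set.mem_range_self i) rfl
  have key : (ε / (1 + ε)) • e + (1 / (1 + ε)) • (∑ i, v i • z i)
      = ∑ i, t i • z i := by
    have hne : (1 : ℝ) + ε ≠ 0 := by positivity
    have : ∑ i, v i • z i = (1 + ε) • (∑ i, t i • z i) - ε • e := by
      rw [← hue, Finset.smul_sum, Finset.smul_sum, ← Finset.sum_sub_distrib]
      exact Finset.sum_congr rfl (by intro i _; simp only [hv, sub_smul, mul_smul])
    rw [this, smul_sub, smul_smul, smul_smul, one_div,
      inv_mul_cancel₀ hne, one_smul]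
    module
  rw [← key]
  exact (convex_convexHull ℝ _).combo_interior_self_mem_interior he hy
    (by positivity) (by positivity) (by rw [← add_div, add_comm, div_self (by positivity)])

lemma derivative_finset_prod {ι : Type*} [DecidableEq ι] (s : Finset ι) (f : ι → ℂ[X]) :
    derivative (∏ i ∈ s, f i) = ∑ i ∈ s, (∏ j ∈ s.erase i, f j) * derivative (f i) := by
  induction s using Finset.induction_on with
  | empty => simp
  | @insert a s ha ih =>
    rw [Finset.prod_insert ha, derivative_mul, ih, Finset.mul_sum, Finset.sum_insert ha,
      Finset.erase_insert ha]
    congr 1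
    · ring
    · refine Finset.sum_congr rfl fun i hi => ?_
      have hia : i ≠ a := fun h => ha (h ▸ hi)
      rw [Finset.erase_insert_of_ne hia.symm,
        Finset.prod_insert (fun h => ha (Finset.mem_of_mem_erase h))]
      ring

/-- Strict Gauss–Lucas for quartics: if `p` has four distinct, non-collinear
roots, then every root of `p'` lies in the interior of the convex hull of the
roots of `p`. -/
theorem strict_gauss_lucas_quartic (c : ℂ) (hc : c ≠ 0) (z : Fin 4 → ℂ)
    (hinj : Function.Injective z) (hcol : ¬ Collinear ℝ (Set.range z))
    (p : ℂ[X]) (hp : p = C c * ∏ i, (X - C (z i))) :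
    ∀ w, eval w (derivative p) = 0 →
      w ∈ interior (convexHull ℝ (Set.range z)) := by
  intro w hw
  -- the sum of products identity
  have hsum : ∑ i : Fin 4, ∏ j ∈ Finset.univ.erase i, (w - z j) = 0 := by
    have : eval w (derivative p) =
        c * ∑ i : Fin 4, ∏ j ∈ Finset.univ.erase i, (w - z j) := by
      rw [hp, derivative_mul, derivative_C, zero_mul, zero_add, derivative_finset_prod]
      simp [eval_finset_sum, eval_prod]
    rw [this] at hw
    exact (mul_eq_zero.mp hw).resolve_left hc
  -- w is not a root
  have hne : ∀ i, w ≠ z i := by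
    intro k hk
    have : ∑ i : Fin 4, ∏ j ∈ Finset.univ.erase i, (w - z j)
        = ∏ j ∈ Finset.univ.erase k, (w - z j) := by
      rw [← Finset.sum_erase_add _ _ (Finset.mem_univ k)]
      rw [Finset.sum_eq_zero, zero_add]
      intro i hi
      apply Finset.prod_eq_zero (Finset.mem_erase.mpr ⟨(Finset.mem_erase.mp hi).1.symm, Finset.mem_univ k⟩)
      rw [hk, sub_self]
    rw [this] at hsum
    have : ∀ j ∈ Finset.univ.erase k, w - z j ≠ 0 := by
      intro j hj
      rw [hk, sub_ne_zero]
      exact fun h => (Finset.mem_erase.mp hj).1 (hinj h.symm)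
    exact Finset.prod_ne_zero_iff.mpr this hsum
  have hd : ∀ i, w - z i ≠ 0 := fun i => sub_ne_zero.mpr (hne i)
  -- logarithmic derivative: sum of inverses is zero
  have hinv : ∑ i : Fin 4, (w - z i)⁻¹ = 0 := by
    have hP : (∏ j : Fin 4, (w - z j)) ≠ 0 := Finset.prod_ne_zero_iff.mpr (fun j _ => hd j)
    have : ∑ i : Fin 4, (w - z i)⁻¹
        = (∏ j : Fin 4, (w - z j))⁻¹ * ∑ i : Fin 4, ∏ j ∈ Finset.univ.erase i, (w - z j) := by
      rw [Finset.mul_sum]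
      refine Finset.sum_congr rfl (fun i _ => ?_)
      have hPe : (∏ j ∈ Finset.univ.erase i, (w - z j)) * (w - z i) = ∏ j, (w - z j) :=
        Finset.prod_erase_mul _ _ (Finset.mem_univ i)
      have hE : (∏ j ∈ Finset.univ.erase i, (w - z j)) ≠ 0 :=
        Finset.prod_ne_zero_iff.mpr fun j _ => hd j
      rw [← hPe, mul_inv, mul_comm ((∏ j ∈ Finset.univ.erase i, (w - z j))⁻¹) ((w - z i)⁻¹),
        mul_assoc, inv_mul_cancel₀ hE, mul_one]
    rw [this, hsum, mul_zero]
  -- convert to real weights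
  set s : Fin 4 → ℝ := fun i => (Complex.normSq (w - z i))⁻¹ with hs
  have hs0 : ∀ i, 0 < s i := by
    intro i
    exact inv_pos.mpr (Complex.normSq_pos.mpr (hd i))
  have hkey : ∑ i : Fin 4, (s i : ℂ) * (w - z i) = 0 := by
    have : ∑ i : Fin 4, (starRingEnd ℂ) ((w - z i)⁻¹) = 0 := by
      rw [← map_sum, hinv, map_zero]
    rw [← this]
    refine Finset.sum_congr rfl (fun i _ => ?_)
    rw [map_inv₀, Complex.inv_def, Complex.conj_conj, Complex.normSq_conj, hs]
    push_cast
    ring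
  set T : ℝ := ∑ i, s i with hT
  have hT0 : 0 < T := Finset.sum_pos (fun i _ => hs0 i) Finset.univ_nonempty
  set t : Fin 4 → ℝ := fun i => s i / T with ht
  have ht0 : ∀ i, 0 < t i := fun i => div_pos (hs0 i) hT0
  have ht1 : ∑ i, t i = 1 := by
    simp only [ht, ← Finset.sum_div, ← hT, div_self hT0.ne']
  have hwt : w = ∑ i, t i • z i := by
    have h1 : (T : ℂ) * w = ∑ i : Fin 4, (s i : ℂ) * z i := by
      have h2 := hkey
      simp only [mul_sub, Finset.sum_sub_distrib, sub_eq_zero] at h2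
      rw [hT]
      push_cast
      rw [Finset.sum_mul]
      exact h2
    have hTne : (T : ℂ) ≠ 0 := by exact_mod_cast hT0.ne'
    have : w = (T : ℂ)⁻¹ * ∑ i : Fin 4, (s i : ℂ) * z i := by
      rw [← h1, inv_mul_cancel_left₀ hTne]
    rw [this, Finset.mul_sum]
    refine Finset.sum_congr rfl (fun i _ => ?_)
    rw [Complex.real_smul, ht]
    push_cast
    ring
  -- affine span is everything
  have hspan : affineSpan ℝ (Set.range z) = ⊤ := by
    by_contra h
    apply hcol
    have hne' : (Set.range z).Nonempty := Set.range_nonempty z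
    have hvs : vectorSpan ℝ (Set.range z) ≠ ⊤ := by
      intro hv
      exact h ((AffineSubspace.affineSpan_eq_top_iff_vectorSpan_eq_top_of_nonempty ℝ ℂ ℂ hne').mpr hv)
    have : FiniteDimensional ℝ (vectorSpan ℝ (Set.range z)) := inferInstance
    rw [collinear_iff_finrank_le_one]
    have hlt : Module.finrank ℝ (vectorSpan ℝ (Set.range z)) < Module.finrank ℝ ℂ :=
      Submodule.finrank_lt hvs
    rw [Complex.finrank_real_complex] at hlt
    omega
  rw [hwt]
  exact pos_combo_mem_interior z hspan t ht0 ht1
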